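/- For every pair of disjoint sets A, B ⊆ {0,1,2}^n, the total number of upward directed edges leaving A plus the total number leaving B is at least |A|·|B|/3^n, where for each coordinate i and each fixed v_{-i} ∈ {0,1,2}^{n-1} the directed edges in direction i are 0→1, 1→2, 0→2, and an edge counts as leaving A if its tail is in A and its head is not in A. -/

import Mathlib

open Finset

abbrev Cube (n : ℕ) := Fin n → Fin 3

/-- The upward directed edges in direction `i` whose tail is in `A` and head is not in `A`:
a triple `(v, t)` encodes the edge from `v` to `Function.update v i t` with `v i < t`. -/
def edgeBorder (n : ℕ) (A : Finset (Cube n)) (i : Fin n) : Finset (Cube n × Fin 3) :=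
  univ.filter (fun p => p.1 ∈ A ∧ Function.update p.1 i p.2 ∉ A ∧ p.1 i < p.2)

/-- The full upper edge border `∂A = ⋃ i, ∂ᵢ A`, encoded as triples `(i, v, t)`. -/
def totalBorder (n : ℕ) (A : Finset (Cube n)) : Finset (Fin n × Cube n × Fin 3) :=
  univ.filter (fun q => q.2.1 ∈ A ∧ Function.update q.2.1 q.1 q.2.2 ∉ A ∧ q.2.1 q.1 < q.2.2)

lemma mem_totalBorder {n : ℕ} {A : Finset (Cube n)} {q : Fin n × Cube n × Fin 3} :
    q ∈ totalBorder n A ↔ q.2.1 ∈ A ∧ Function.update q.2.1 q.1 q.2.2 ∉ A ∧ q.2.1 q.1 < q.2.2 := by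
  simp [totalBorder]

/-- The slice of `A` at value `t` of coordinate `0`. -/
def cubeSlice (n : ℕ) (A : Finset (Cube (n+1))) (t : Fin 3) : Finset (Cube n) :=
  univ.filter (fun u => Fin.cons t u ∈ A)

lemma mem_cubeSlice {n : ℕ} {A : Finset (Cube (n+1))} {t : Fin 3} {u : Cube n} :
    u ∈ cubeSlice n A t ↔ Fin.cons t u ∈ A := by simp [cubeSlice]

lemma cubeSlice_disjoint {n : ℕ} {A B : Finset (Cube (n+1))} (hAB : Disjoint A B) (t : Fin 3) :
    Disjoint (cubeSlice n A t) (cubeSlice n B t) := by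
  rw [Finset.disjoint_left] at hAB ⊢
  intro u hu hv
  exact hAB (mem_cubeSlice.1 hu) (mem_cubeSlice.1 hv)

lemma card_cubeSlices (n : ℕ) (A : Finset (Cube (n+1))) :
    A.card = ∑ t : Fin 3, (cubeSlice n A t).card := by
  rw [Finset.card_eq_sum_card_fiberwise (f := fun v : Cube (n+1) => v 0) (t := univ)
    (fun x _ => mem_univ _)]
  refine Finset.sum_congr rfl fun t _ => ?_
  refine Finset.card_nbij' (fun v => Fin.tail v) (fun u => Fin.cons t u) ?_ ?_ ?_ ?_
  · intro v hv
    change v ∈ A.filter (fun v : Cube (n+1) => v 0 = t) at hv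
    simp only [mem_filter] at hv
    show Fin.tail v ∈ cubeSlice n A t
    rw [mem_cubeSlice, ← hv.2, Fin.cons_self_tail]
    exact hv.1
  · intro u hu
    show Fin.cons t u ∈ A.filter (fun v : Cube (n+1) => v 0 = t)
    simp only [mem_filter]
    exact ⟨mem_cubeSlice.1 hu, Fin.cons_zero _ _⟩
  · intro v hv
    change v ∈ A.filter (fun v : Cube (n+1) => v 0 = t) at hv
    simp only [mem_filter] at hv
    show Fin.cons t (Fin.tail v) = v
    rw [← hv.2]
    exact Fin.cons_self_tail v
  · intro u _
    exact Fin.tail_cons _ _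

lemma card_border_horiz (n : ℕ) (A : Finset (Cube (n+1))) (t : Fin 3) :
    (totalBorder n (cubeSlice n A t)).card =
      ((totalBorder (n+1) A).filter (fun q => ¬(q.1 = 0) ∧ q.2.1 0 = t)).card := by
  refine Finset.card_bij' (fun q _ => (q.1.succ, Fin.cons t q.2.1, q.2.2))
    (fun q hq => (q.1.pred (Finset.mem_filter.1 hq).2.1, Fin.tail q.2.1, q.2.2)) ?_ ?_ ?_ ?_
  · rintro ⟨i, u, s⟩ hq
    rw [mem_totalBorder] at hq
    obtain ⟨h1, h2, h3⟩ := hq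
    rw [Finset.mem_filter, mem_totalBorder]
    refine ⟨⟨mem_cubeSlice.1 h1, ?_, ?_⟩, Fin.succ_ne_zero _, ?_⟩
    · show Function.update (Fin.cons t u) i.succ s ∉ A
      rw [← Fin.cons_update]
      intro hmem
      exact h2 (mem_cubeSlice.2 hmem)
    · simp only [Fin.cons_succ]
      exact h3
    · simp only [Fin.cons_zero]
  · rintro ⟨j, v, s⟩ hq
    obtain ⟨hq, hne, h0⟩ := Finset.mem_filter.1 hq
    rw [mem_totalBorder] at hq
    obtain ⟨h1, h2, h3⟩ := hq
    rw [mem_totalBorder]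
    refine ⟨?_, ?_, ?_⟩
    · show Fin.tail v ∈ cubeSlice n A t
      rw [mem_cubeSlice, ← h0, Fin.cons_self_tail]
      exact h1
    · show Function.update (Fin.tail v) (j.pred hne) s ∉ cubeSlice n A t
      rw [mem_cubeSlice, ← h0]
      intro hmem
      apply h2
      rw [Fin.cons_update, Fin.succ_pred, Fin.cons_self_tail] at hmem
      exact hmem
    · show Fin.tail v (j.pred hne) < s
      show v ((j.pred hne).succ) < s
      rw [Fin.succ_pred]
      exact h3
  · rintro ⟨i, u, s⟩ hq
    simp only [Fin.pred_succ, Fin.tail_cons]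
  · rintro ⟨j, v, s⟩ hq
    obtain ⟨hq, hne, h0⟩ := Finset.mem_filter.1 hq
    show (((j.pred hne).succ : Fin (n+1)), Fin.cons t (Fin.tail v), s) = (j, v, s)
    rw [Fin.succ_pred, ← h0, Fin.cons_self_tail]

lemma card_border_horiz_sum (n : ℕ) (A : Finset (Cube (n+1))) :
    ((totalBorder (n+1) A).filter (fun q => ¬(q.1 = 0))).card =
      ∑ t : Fin 3, (totalBorder n (cubeSlice n A t)).card := by
  rw [Finset.card_eq_sum_card_fiberwise (f := fun q : Fin (n+1) × Cube (n+1) × Fin 3 => q.2.1 0)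
    (t := univ) (fun x _ => mem_univ _)]
  refine Finset.sum_congr rfl fun t _ => ?_
  rw [Finset.filter_filter, card_border_horiz n A t]

lemma card_border_vert (n : ℕ) (A : Finset (Cube (n+1))) (s t : Fin 3) (hst : s < t) :
    (cubeSlice n A s \ cubeSlice n A t).card =
      ((totalBorder (n+1) A).filter (fun q => q.1 = 0 ∧ q.2.1 0 = s ∧ q.2.2 = t)).card := by
  refine Finset.card_bij' (fun u _ => ((0 : Fin (n+1)), Fin.cons s u, t))
    (fun q _ => Fin.tail q.2.1) ?_ ?_ ?_ ?_
  · intro u hu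
    obtain ⟨h1, h2⟩ := Finset.mem_sdiff.1 hu
    rw [Finset.mem_filter, mem_totalBorder]
    refine ⟨⟨mem_cubeSlice.1 h1, ?_, ?_⟩, rfl, ?_, rfl⟩
    · show Function.update (Fin.cons s u) 0 t ∉ A
      rw [Fin.update_cons_zero]
      intro hmem
      exact h2 (mem_cubeSlice.2 hmem)
    · simp only [Fin.cons_zero]
      exact hst
    · simp only [Fin.cons_zero]
  · rintro ⟨j, v, s'⟩ hq
    obtain ⟨hq, he1, he2, he3⟩ := Finset.mem_filter.1 hq
    rw [mem_totalBorder] at hq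
    obtain ⟨h1, h2, h3⟩ := hq
    rw [Finset.mem_sdiff]
    constructor
    · show Fin.tail v ∈ cubeSlice n A s
      rw [mem_cubeSlice, ← he2, Fin.cons_self_tail]
      exact h1
    · show Fin.tail v ∉ cubeSlice n A t
      rw [mem_cubeSlice]
      intro hmem
      apply h2
      simp only at he1 he3
      have hupd : Function.update v j s' = Fin.cons t (Fin.tail v) := by
        rw [he1, he3]
        conv_lhs => rw [← Fin.cons_self_tail v]
        rw [Fin.update_cons_zero]
      show Function.update v j s' ∈ A
      rw [hupd]
      exact hmem
  · intro u _
    exact Fin.tail_cons _ _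
  · rintro ⟨j, v, s'⟩ hq
    obtain ⟨hq, he1, he2, he3⟩ := Finset.mem_filter.1 hq
    simp only at he1 he2 he3
    show ((0 : Fin (n+1)), Fin.cons s (Fin.tail v), t) = (j, v, s')
    rw [← he2, Fin.cons_self_tail, ← he1, ← he3]

lemma vert_pair_disjoint (n : ℕ) (A : Finset (Cube (n+1))) (s t s' t' : Fin 3)
    (h : ¬(s = s' ∧ t = t')) :
    Disjoint ((totalBorder (n+1) A).filter (fun q => q.1 = 0 ∧ q.2.1 0 = s ∧ q.2.2 = t))
      ((totalBorder (n+1) A).filter (fun q => q.1 = 0 ∧ q.2.1 0 = s' ∧ q.2.2 = t')) := by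
  rw [Finset.disjoint_left]
  intro q hq hq'
  obtain ⟨_, _, h2, h3⟩ := Finset.mem_filter.1 hq
  obtain ⟨_, _, h2', h3'⟩ := Finset.mem_filter.1 hq'
  exact h ⟨h2 ▸ h2'.symm ▸ rfl, h3 ▸ h3'.symm ▸ rfl⟩

lemma card_border_vert_sum (n : ℕ) (A : Finset (Cube (n+1))) :
    (cubeSlice n A 0 \ cubeSlice n A 1).card + (cubeSlice n A 0 \ cubeSlice n A 2).card
      + (cubeSlice n A 1 \ cubeSlice n A 2).card ≤
      ((totalBorder (n+1) A).filter (fun q => q.1 = 0)).card := by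
  set T01 := (totalBorder (n+1) A).filter (fun q => q.1 = 0 ∧ q.2.1 0 = 0 ∧ q.2.2 = 1) with hT01
  set T02 := (totalBorder (n+1) A).filter (fun q => q.1 = 0 ∧ q.2.1 0 = 0 ∧ q.2.2 = 2) with hT02
  set T12 := (totalBorder (n+1) A).filter (fun q => q.1 = 0 ∧ q.2.1 0 = 1 ∧ q.2.2 = 2) with hT12
  have hd1 : Disjoint T01 T02 := vert_pair_disjoint n A 0 1 0 2 (by decide)
  have hd2 : Disjoint T01 T12 := vert_pair_disjoint n A 0 1 1 2 (by decide)
  have hd3 : Disjoint T02 T12 := vert_pair_disjoint n A 0 2 1 2 (by decide)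
  have hsub : T01 ∪ T02 ∪ T12 ⊆ (totalBorder (n+1) A).filter (fun q => q.1 = 0) := by
    intro q hq
    rcases Finset.mem_union.1 hq with hq | hq
    · rcases Finset.mem_union.1 hq with hq | hq
      · exact Finset.mem_filter.2 ⟨(Finset.mem_filter.1 hq).1, (Finset.mem_filter.1 hq).2.1⟩
      · exact Finset.mem_filter.2 ⟨(Finset.mem_filter.1 hq).1, (Finset.mem_filter.1 hq).2.1⟩
    · exact Finset.mem_filter.2 ⟨(Finset.mem_filter.1 hq).1, (Finset.mem_filter.1 hq).2.1⟩
  calc (cubeSlice n A 0 \ cubeSlice n A 1).card + (cubeSlice n A 0 \ cubeSlice n A 2).card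
      + (cubeSlice n A 1 \ cubeSlice n A 2).card
      = T01.card + T02.card + T12.card := by
        rw [hT01, hT02, hT12, ← card_border_vert n A 0 1 (by decide),
          ← card_border_vert n A 0 2 (by decide), ← card_border_vert n A 1 2 (by decide)]
    _ = (T01 ∪ T02 ∪ T12).card := by
        rw [Finset.card_union_of_disjoint (Finset.disjoint_union_left.2 ⟨hd2, hd3⟩),
          Finset.card_union_of_disjoint hd1]
    _ ≤ _ := Finset.card_le_card hsub

lemma border_decomp (n : ℕ) (A : Finset (Cube (n+1))) :
    (totalBorder n (cubeSlice n A 0)).card + (totalBorder n (cubeSlice n A 1)).card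
      + (totalBorder n (cubeSlice n A 2)).card
      + ((cubeSlice n A 0 \ cubeSlice n A 1).card + (cubeSlice n A 0 \ cubeSlice n A 2).card
        + (cubeSlice n A 1 \ cubeSlice n A 2).card) ≤ (totalBorder (n+1) A).card := by
  have hsplit := Finset.card_filter_add_card_filter_not
    (s := totalBorder (n+1) A) (p := fun q => q.1 = 0)
  have hh := card_border_horiz_sum n A
  rw [Fin.sum_univ_three] at hh
  have hv := card_border_vert_sum n A
  omega

lemma key (N x y u v d e : ℝ) (hx0 : 0 ≤ x) (hxN : x ≤ N) (hu0 : 0 ≤ u) (huN : u ≤ N)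
    (hy0 : 0 ≤ y) (hyN : y ≤ N) (hv0 : 0 ≤ v) (hvN : v ≤ N)
    (hd0 : 0 ≤ d) (hd : x - u ≤ d) (he0 : 0 ≤ e) (he : y - v ≤ e) :
    x*v + u*y - x*y - u*v ≤ N*(d+e) := by
  have hNd : 0 ≤ N := le_trans hx0 hxN
  rcases le_total x u with h | h
  · rcases le_total y v with h2 | h2
    · -- (x-u)(v-y) : x ≤ u, y ≤ v : product = (u-x)(y-v)... need ≤; (x-u)(v-y) ≤ 0
      nlinarith [mul_nonneg (sub_nonneg.2 h) (sub_nonneg.2 h2), mul_nonneg hNd hd0,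
        mul_nonneg hNd he0]
    · -- x ≤ u, v ≤ y : (x-u)(v-y) = (u-x)(y-v) ≤ N * e
      nlinarith [mul_le_mul he (by linarith : u - x ≤ N) (by linarith) he0, mul_nonneg hNd hd0]
  · rcases le_total y v with h2 | h2
    · -- u ≤ x, y ≤ v : (x-u)(v-y) ≤ d * N
      nlinarith [mul_le_mul hd (by linarith : v - y ≤ N) (by linarith) hd0, mul_nonneg hNd he0]
    · nlinarith [mul_nonneg (sub_nonneg.2 h) (sub_nonneg.2 h2), mul_nonneg hNd hd0,
        mul_nonneg hNd he0]

lemma slice_sum_le (n : ℕ) (A B : Finset (Cube (n+1))) (hAB : Disjoint A B) (t : Fin 3) :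
    (cubeSlice n A t).card + (cubeSlice n B t).card ≤ 3 ^ n := by
  have hdis := cubeSlice_disjoint hAB t
  have h1 : (cubeSlice n A t ∪ cubeSlice n B t).card
      = (cubeSlice n A t).card + (cubeSlice n B t).card :=
    Finset.card_union_of_disjoint hdis
  have h2 : (cubeSlice n A t ∪ cubeSlice n B t).card ≤ Fintype.card (Cube n) :=
    Finset.card_le_univ _
  simp only [Fintype.card_fun, Fintype.card_fin] at h2
  omega

lemma sdiff_ge (n : ℕ) (S T : Finset (Cube n)) :
    S.card ≤ (S \ T).card + T.card := Finset.card_le_card_sdiff_add_card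

set_option maxHeartbeats 1000000 in
/-- For disjoint `A, B ⊆ {0,1,2}ⁿ`, `|∂A| + |∂B| ≥ |A|·|B| / 3ⁿ`. -/
theorem stmt0 (n : ℕ) (A B : Finset (Cube n)) (hAB : Disjoint A B) :
    ((totalBorder n A).card + (totalBorder n B).card : ℝ) ≥ A.card * B.card / 3 ^ n := by
  induction n with
  | zero =>
    have hcard : A.card + B.card ≤ 1 := by
      have h1 : (A ∪ B).card = A.card + B.card := Finset.card_union_of_disjoint hAB
      have h2 : (A ∪ B).card ≤ Fintype.card (Cube 0) := Finset.card_le_univ _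
      simp only [Fintype.card_fun, Fintype.card_fin, pow_zero] at h2
      omega
    have hz : A.card * B.card = 0 := by
      rcases Nat.eq_zero_or_pos A.card with h | h
      · simp [h]
      · have : B.card = 0 := by omega
        simp [this]
    rw [ge_iff_le, show ((A.card : ℝ) * B.card) = ((A.card * B.card : ℕ) : ℝ) by push_cast; ring,
      hz]
    simp only [Nat.cast_zero, zero_div]
    positivity
  | succ n ih =>
    set N : ℝ := (3 : ℝ) ^ n with hNdef
    have hNpos : (0 : ℝ) < N := by positivity
    -- notation
    set a0 := ((cubeSlice n A 0).card : ℝ)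
    set a1 := ((cubeSlice n A 1).card : ℝ)
    set a2 := ((cubeSlice n A 2).card : ℝ)
    set b0 := ((cubeSlice n B 0).card : ℝ)
    set b1 := ((cubeSlice n B 1).card : ℝ)
    set b2 := ((cubeSlice n B 2).card : ℝ)
    -- nonnegativity
    have ha0 : 0 ≤ a0 := Nat.cast_nonneg _
    have ha1 : 0 ≤ a1 := Nat.cast_nonneg _
    have ha2 : 0 ≤ a2 := Nat.cast_nonneg _
    have hb0 : 0 ≤ b0 := Nat.cast_nonneg _
    have hb1 : 0 ≤ b1 := Nat.cast_nonneg _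
    have hb2 : 0 ≤ b2 := Nat.cast_nonneg _
    -- upper bounds from disjointness
    have hub : ∀ t : Fin 3, ((cubeSlice n A t).card : ℝ) + ((cubeSlice n B t).card : ℝ) ≤ N := by
      intro t
      have := slice_sum_le n A B hAB t
      have := (Nat.cast_le (α := ℝ)).2 this
      push_cast at this
      rw [hNdef]
      convert this using 2 <;> push_cast <;> ring
    have hub0 := hub 0
    have hub1 := hub 1
    have hub2 := hub 2
    -- induction hypothesis on slices
    have hIH : ∀ t : Fin 3,
        ((cubeSlice n A t).card : ℝ) * ((cubeSlice n B t).card : ℝ) / N ≤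
          ((totalBorder n (cubeSlice n A t)).card + (totalBorder n (cubeSlice n B t)).card : ℝ) :=
      fun t => ih (cubeSlice n A t) (cubeSlice n B t) (cubeSlice_disjoint hAB t)
    have hIH0 := hIH 0
    have hIH1 := hIH 1
    have hIH2 := hIH 2
    -- cardinalities
    have hAcard : (A.card : ℝ) = a0 + a1 + a2 := by
      have := card_cubeSlices n A
      rw [Fin.sum_univ_three] at this
      rw [this]; push_cast; ring
    have hBcard : (B.card : ℝ) = b0 + b1 + b2 := by
      have := card_cubeSlices n B
      rw [Fin.sum_univ_three] at this
      rw [this]; push_cast; ring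
    -- border decompositions (cast to ℝ)
    have hdA := border_decomp n A
    have hdB := border_decomp n B
    have hdA' := (Nat.cast_le (α := ℝ)).2 hdA
    have hdB' := (Nat.cast_le (α := ℝ)).2 hdB
    push_cast at hdA' hdB'
    -- sdiff bounds
    have hsA01 := (Nat.cast_le (α := ℝ)).2 (sdiff_ge n (cubeSlice n A 0) (cubeSlice n A 1))
    have hsA02 := (Nat.cast_le (α := ℝ)).2 (sdiff_ge n (cubeSlice n A 0) (cubeSlice n A 2))
    have hsA12 := (Nat.cast_le (α := ℝ)).2 (sdiff_ge n (cubeSlice n A 1) (cubeSlice n A 2))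
    have hsB01 := (Nat.cast_le (α := ℝ)).2 (sdiff_ge n (cubeSlice n B 0) (cubeSlice n B 1))
    have hsB02 := (Nat.cast_le (α := ℝ)).2 (sdiff_ge n (cubeSlice n B 0) (cubeSlice n B 2))
    have hsB12 := (Nat.cast_le (α := ℝ)).2 (sdiff_ge n (cubeSlice n B 1) (cubeSlice n B 2))
    push_cast at hsA01 hsA02 hsA12 hsB01 hsB02 hsB12
    -- abbreviations for the pieces
    set cA0 := ((totalBorder n (cubeSlice n A 0)).card : ℝ)
    set cA1 := ((totalBorder n (cubeSlice n A 1)).card : ℝ)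
    set cA2 := ((totalBorder n (cubeSlice n A 2)).card : ℝ)
    set cB0 := ((totalBorder n (cubeSlice n B 0)).card : ℝ)
    set cB1 := ((totalBorder n (cubeSlice n B 1)).card : ℝ)
    set cB2 := ((totalBorder n (cubeSlice n B 2)).card : ℝ)
    set dA01 := (((cubeSlice n A 0 \ cubeSlice n A 1)).card : ℝ)
    set dA02 := (((cubeSlice n A 0 \ cubeSlice n A 2)).card : ℝ)
    set dA12 := (((cubeSlice n A 1 \ cubeSlice n A 2)).card : ℝ)
    set dB01 := (((cubeSlice n B 0 \ cubeSlice n B 1)).card : ℝ)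
    set dB02 := (((cubeSlice n B 0 \ cubeSlice n B 2)).card : ℝ)
    set dB12 := (((cubeSlice n B 1 \ cubeSlice n B 2)).card : ℝ)
    have hdA0 : (0:ℝ) ≤ dA01 := Nat.cast_nonneg _
    have hdA0' : (0:ℝ) ≤ dA02 := Nat.cast_nonneg _
    have hdA1 : (0:ℝ) ≤ dA12 := Nat.cast_nonneg _
    have hdB0 : (0:ℝ) ≤ dB01 := Nat.cast_nonneg _
    have hdB0' : (0:ℝ) ≤ dB02 := Nat.cast_nonneg _
    have hdB1 : (0:ℝ) ≤ dB12 := Nat.cast_nonneg _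
    -- pairwise key inequalities
    have hk01 : a0*b1 + a1*b0 - a0*b0 - a1*b1 ≤ N*(dA01 + dB01) :=
      key N a0 b0 a1 b1 dA01 dB01 ha0 (by linarith) ha1 (by linarith) hb0 (by linarith)
        hb1 (by linarith) hdA0 (by linarith) hdB0 (by linarith)
    have hk02 : a0*b2 + a2*b0 - a0*b0 - a2*b2 ≤ N*(dA02 + dB02) :=
      key N a0 b0 a2 b2 dA02 dB02 ha0 (by linarith) ha2 (by linarith) hb0 (by linarith)
        hb2 (by linarith) hdA0' (by linarith) hdB0' (by linarith)
    have hk12 : a1*b2 + a2*b1 - a1*b1 - a2*b2 ≤ N*(dA12 + dB12) :=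
      key N a1 b1 a2 b2 dA12 dB12 ha1 (by linarith) ha2 (by linarith) hb1 (by linarith)
        hb2 (by linarith) hdA1 (by linarith) hdB1 (by linarith)
    -- IH products
    have hp0 : a0*b0 ≤ (cA0 + cB0) * N := by
      rw [div_le_iff₀ hNpos] at hIH0; linarith
    have hp1 : a1*b1 ≤ (cA1 + cB1) * N := by
      rw [div_le_iff₀ hNpos] at hIH1; linarith
    have hp2 : a2*b2 ≤ (cA2 + cB2) * N := by
      rw [div_le_iff₀ hNpos] at hIH2; linarith
    -- final assembly
    rw [ge_iff_le, hAcard, hBcard, show ((3:ℝ) ^ (n+1)) = 3 * N by rw [hNdef, pow_succ]; ring,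
      div_le_iff₀ (by linarith : (0:ℝ) < 3*N)]
    have hmulA : (cA0 + cA1 + cA2 + (dA01 + dA02 + dA12)) * (3*N) ≤
        ((totalBorder (n+1) A).card : ℝ) * (3*N) :=
      mul_le_mul_of_nonneg_right hdA' (by linarith)
    have hmulB : (cB0 + cB1 + cB2 + (dB01 + dB02 + dB12)) * (3*N) ≤
        ((totalBorder (n+1) B).card : ℝ) * (3*N) :=
      mul_le_mul_of_nonneg_right hdB' (by linarith)
    have hNd01 : 0 ≤ N * dA01 := mul_nonneg hNpos.le hdA0
    have hNd02 : 0 ≤ N * dA02 := mul_nonneg hNpos.le hdA0'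
    have hNd12 : 0 ≤ N * dA12 := mul_nonneg hNpos.le hdA1
    have hNe01 : 0 ≤ N * dB01 := mul_nonneg hNpos.le hdB0
    have hNe02 : 0 ≤ N * dB02 := mul_nonneg hNpos.le hdB0'
    have hNe12 : 0 ≤ N * dB12 := mul_nonneg hNpos.le hdB1
    linarith [hmulA, hmulB, hk01, hk02, hk12, hp0, hp1, hp2, hNd01, hNd02, hNd12,
      hNe01, hNe02, hNe12]
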